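/- Let G be a finite unweighted graph and suppose (μ, x) is an eigenpair of the maxcut eigenproblem (M): 0 ∈ Δ₁x − μ·vol(V)·∂‖x‖_∞. Let D₀¹, …, D₀^{r⁰} be the null domains of x, i.e., the vertex sets of the connected components of the subgraph induced on D₀(x). Then |E(D₊(x), D₀^ω)| = |E(D₋(x), D₀^ω)| for every ω = 1, …, r⁰. -/
import Mathlib


open Finset

noncomputable section

/-- The set-valued sign function: `{1}` if `t > 0`, `{-1}` if `t < 0`, `[-1,1]` if `t = 0`. -/
def Sgn (t : ℝ) : Set ℝ := if 0 < t then {1} else if t < 0 then {-1} else Set.Icc (-1) 1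

variable {n : ℕ}

/-- The degree `d_i` of vertex `i` (unit edge weights), as a real number. -/
def degR (G : SimpleGraph (Fin n)) [DecidableRel G.Adj] (i : Fin n) : ℝ := (G.degree i : ℝ)

/-- `vol(V) = Σ_i d_i`. -/
def volV (G : SimpleGraph (Fin n)) [DecidableRel G.Adj] : ℝ := ∑ i, degR G i

/-- `(Δ₁ x)`-type row sum `Σ_{j ∼ i} z_{ij}`. -/
def rowSum (G : SimpleGraph (Fin n)) [DecidableRel G.Adj] (z : Fin n → Fin n → ℝ)
    (i : Fin n) : ℝ :=
  ∑ j, if G.Adj i j then z i j else 0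

/-- `D₊(x) = {i : x_i = ‖x‖_∞}` (the norm on `Fin n → ℝ` is the sup norm). -/
def Dplus (x : Fin n → ℝ) : Set (Fin n) := {i | x i = ‖x‖}

/-- `D₋(x) = {i : −x_i = ‖x‖_∞}`. -/
def Dminus (x : Fin n → ℝ) : Set (Fin n) := {i | -x i = ‖x‖}

/-- `D₀(x) = {i : |x_i| < ‖x‖_∞}`. -/
def Dzero (x : Fin n → ℝ) : Set (Fin n) := {i | |x i| < ‖x‖}

/-- `(μ, x)` with `x ≠ 0` is an eigenpair of the maxcut eigenproblem (M):
`0 ∈ Δ₁x − μ·vol(V)·∂‖x‖_∞`. -/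
def IsEigenM (G : SimpleGraph (Fin n)) [DecidableRel G.Adj]
    (mu : ℝ) (x : Fin n → ℝ) : Prop :=
  x ≠ 0 ∧ ∃ z : Fin n → Fin n → ℝ,
    (∀ i j, G.Adj i j → z i j ∈ Sgn (x i - x j)) ∧
    (∀ i j, z i j = - z j i) ∧
    (∀ i, i ∈ Dzero x → rowSum G z i = 0) ∧
    (∀ i, i ∈ Dplus x ∪ Dminus x →
      ∃ p ∈ Set.Icc (0 : ℝ) 1, rowSum G z i = mu * volV G * Real.sign (x i) * p) ∧
    (∑ i, |rowSum G z i|) = mu * volV G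

open Classical in
/-- `|E(A,B)|` for sets `A, B ⊆ V`: number of ordered pairs `(i,j)` with `i ∈ A`, `j ∈ B`,
`i ∼ j` (each crossing edge counted once when `A` and `B` are disjoint). -/
def cutSet (G : SimpleGraph (Fin n)) (A B : Set (Fin n)) : ℝ :=
  ∑ i, ∑ j, if i ∈ A ∧ j ∈ B ∧ G.Adj i j then (1 : ℝ) else 0

open Classical in
/-- The ternary vector `1_{A,B}`: `+1` on `A`, `−1` on `B`, `0` elsewhere. -/
def oneST (A B : Set (Fin n)) : Fin n → ℝ :=
  fun i => if i ∈ A then 1 else if i ∈ B then -1 else 0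

/-- `D` is the vertex set of a connected component of the subgraph of `G` induced by `P`. -/
def IsCompIn (G : SimpleGraph (Fin n)) (P : Set (Fin n)) (D : Set (Fin n)) : Prop :=
  ∃ v ∈ P, D = {u | Relation.ReflTransGen (fun a b => G.Adj a b ∧ a ∈ P ∧ b ∈ P) v u}

theorem stmt15 (G : SimpleGraph (Fin n)) [DecidableRel G.Adj]
    (mu : ℝ) (x : Fin n → ℝ) (hx : IsEigenM G mu x)
    (D : Set (Fin n)) (hD : IsCompIn G (Dzero x) D) :
    cutSet G (Dplus x) D = cutSet G (Dminus x) D := by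
  classical
  obtain ⟨hx0, z, hz1, hz2, hz3, _, _⟩ := hx
  obtain ⟨v, hv, hDdef⟩ := hD
  have habs : ∀ j, |x j| ≤ ‖x‖ := fun j => by
    simpa [Real.norm_eq_abs] using norm_le_pi_norm x j
  have hnorm : 0 < ‖x‖ := lt_of_le_of_lt (abs_nonneg _) hv
  have hDsub : ∀ u ∈ D, u ∈ Dzero x := by
    intro u hu
    rw [hDdef] at hu
    simp only [Set.mem_setOf_eq] at hu
    induction hu with
    | refl => exact hv
    | tail _ h _ => exact h.2.2
  have hDclosed : ∀ i ∈ D, ∀ j, G.Adj i j → j ∈ Dzero x → j ∈ D := by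
    intro i hi j hadj hj
    have hi0 := hDsub i hi
    rw [hDdef] at hi ⊢
    exact Relation.ReflTransGen.tail hi ⟨hadj, hi0, hj⟩
  have hclass : ∀ j, j ∈ Dzero x ∨ j ∈ Dplus x ∨ j ∈ Dminus x := by
    intro j
    rcases lt_or_eq_of_le (habs j) with h | h
    · exact Or.inl h
    · rcases (abs_eq hnorm.le).mp h with h' | h'
      · exact Or.inr (Or.inl h')
      · exact Or.inr (Or.inr (by simp [Dminus, h']))
  have hzP : ∀ i ∈ D, ∀ j ∈ Dplus x, G.Adj i j → z i j = -1 := by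
    intro i hi j hj hadj
    have hi0 : |x i| < ‖x‖ := hDsub i hi
    have hj' : x j = ‖x‖ := hj
    have hlt : x i - x j < 0 := by
      have := le_abs_self (x i); linarith
    have hm := hz1 i j hadj
    rw [Sgn, if_neg (by linarith), if_pos hlt] at hm
    exact hm
  have hzM : ∀ i ∈ D, ∀ j ∈ Dminus x, G.Adj i j → z i j = 1 := by
    intro i hi j hj hadj
    have hi0 : |x i| < ‖x‖ := hDsub i hi
    have hj' : -x j = ‖x‖ := hj
    have hlt : 0 < x i - x j := by
      have := neg_abs_le (x i); linarith
    have hm := hz1 i j hadj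
    rw [Sgn, if_pos hlt] at hm
    exact hm
  -- disjointness facts
  have hne : ∀ j ∈ D, j ∉ Dplus x ∧ j ∉ Dminus x := by
    intro j hj
    have h0 : |x j| < ‖x‖ := hDsub j hj
    constructor
    · intro h; have : x j = ‖x‖ := h; have := le_abs_self (x j); linarith
    · intro h; have : -x j = ‖x‖ := h; have := neg_abs_le (x j); linarith
  have hPM : ∀ j, j ∈ Dplus x → j ∉ Dminus x := by
    intro j h1 h2
    have e1 : x j = ‖x‖ := h1
    have e2 : -x j = ‖x‖ := h2
    linarith
  -- total sum is zero
  have hsum0 : ∑ i, ∑ j, (if i ∈ D ∧ G.Adj i j then z i j else 0) = 0 := by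
    apply Finset.sum_eq_zero
    intro i _
    by_cases hi : i ∈ D
    · have h0 := hz3 i (hDsub i hi)
      have he : (∑ j, if i ∈ D ∧ G.Adj i j then z i j else 0) = rowSum G z i :=
        Finset.sum_congr rfl fun j _ => by simp [hi]
      rw [he]; exact h0
    · exact Finset.sum_eq_zero fun j _ => by simp [hi]
  -- decomposition
  have hdec : ∀ i j, (if i ∈ D ∧ G.Adj i j then z i j else 0)
      = (if i ∈ D ∧ j ∈ D ∧ G.Adj i j then z i j else 0)
        + (if i ∈ D ∧ j ∈ Dplus x ∧ G.Adj i j then (-1 : ℝ) else 0)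
        + (if i ∈ D ∧ j ∈ Dminus x ∧ G.Adj i j then (1 : ℝ) else 0) := by
    intro i j
    by_cases hi : i ∈ D
    · by_cases ha : G.Adj i j
      · rcases hclass j with hj | hj | hj
        · have hjD : j ∈ D := hDclosed i hi j ha hj
          have hnj := hne j hjD
          rw [if_pos ⟨hi, ha⟩, if_pos ⟨hi, hjD, ha⟩,
            if_neg (fun hc => hnj.1 hc.2.1), if_neg (fun hc => hnj.2 hc.2.1)]
          ring
        · have hjD : j ∉ D := fun hc => (hne j hc).1 hj
          rw [if_pos ⟨hi, ha⟩, if_neg (fun hc => hjD hc.2.1), if_pos ⟨hi, hj, ha⟩,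
            if_neg (fun hc => hPM j hj hc.2.1), hzP i hi j hj ha]
          ring
        · have hjD : j ∉ D := fun hc => (hne j hc).2 hj
          rw [if_pos ⟨hi, ha⟩, if_neg (fun hc => hjD hc.2.1),
            if_neg (fun hc => hPM j hc.2.1 hj), if_pos ⟨hi, hj, ha⟩,
            hzM i hi j hj ha]
          ring
      · simp [ha]
    · simp [hi]
  have hSD : ∑ i, ∑ j, (if i ∈ D ∧ j ∈ D ∧ G.Adj i j then z i j else 0) = 0 := by
    set S := ∑ i, ∑ j, (if i ∈ D ∧ j ∈ D ∧ G.Adj i j then z i j else 0) with hS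
    have h1 : S = ∑ j, ∑ i, (if i ∈ D ∧ j ∈ D ∧ G.Adj i j then z i j else 0) :=
      Finset.sum_comm
    have h2 : ∀ j i, (if i ∈ D ∧ j ∈ D ∧ G.Adj i j then z i j else 0)
        = -(if j ∈ D ∧ i ∈ D ∧ G.Adj j i then z j i else 0) := by
      intro j i
      by_cases h : j ∈ D ∧ i ∈ D ∧ G.Adj j i
      · rw [if_pos ⟨h.2.1, h.1, h.2.2.symm⟩, if_pos h, hz2 i j]
      · rw [if_neg h, if_neg (fun hc => h ⟨hc.2.1, hc.1, hc.2.2.symm⟩), neg_zero]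
    have h3 : S = -S := by
      calc S = ∑ j, ∑ i, (if i ∈ D ∧ j ∈ D ∧ G.Adj i j then z i j else 0) := h1
        _ = ∑ j, ∑ i, -(if j ∈ D ∧ i ∈ D ∧ G.Adj j i then z j i else 0) :=
            Finset.sum_congr rfl fun j _ => Finset.sum_congr rfl fun i _ => h2 j i
        _ = -S := by rw [hS]; simp [Finset.sum_neg_distrib]
    linarith
  have hSP : ∑ i, ∑ j, (if i ∈ D ∧ j ∈ Dplus x ∧ G.Adj i j then (-1 : ℝ) else 0)
      = -cutSet G (Dplus x) D := by
    rw [cutSet, ← Finset.sum_neg_distrib]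
    rw [Finset.sum_comm]
    refine Finset.sum_congr rfl fun i _ => ?_
    rw [← Finset.sum_neg_distrib]
    refine Finset.sum_congr rfl fun j _ => ?_
    by_cases h : i ∈ Dplus x ∧ j ∈ D ∧ G.Adj i j
    · rw [if_pos ⟨h.2.1, h.1, h.2.2.symm⟩, if_pos h]
    · rw [if_neg (fun hc => h ⟨hc.2.1, hc.1, hc.2.2.symm⟩), if_neg h, neg_zero]
  have hSM : ∑ i, ∑ j, (if i ∈ D ∧ j ∈ Dminus x ∧ G.Adj i j then (1 : ℝ) else 0)
      = cutSet G (Dminus x) D := by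
    rw [cutSet, Finset.sum_comm]
    refine Finset.sum_congr rfl fun i _ => Finset.sum_congr rfl fun j _ => ?_
    by_cases h : i ∈ Dminus x ∧ j ∈ D ∧ G.Adj i j
    · rw [if_pos ⟨h.2.1, h.1, h.2.2.symm⟩, if_pos h]
    · rw [if_neg (fun hc => h ⟨hc.2.1, hc.1, hc.2.2.symm⟩), if_neg h]
  have htot : (∑ i, ∑ j, (if i ∈ D ∧ G.Adj i j then z i j else 0))
      = (∑ i, ∑ j, (if i ∈ D ∧ j ∈ D ∧ G.Adj i j then z i j else 0))
        + (∑ i, ∑ j, (if i ∈ D ∧ j ∈ Dplus x ∧ G.Adj i j then (-1 : ℝ) else 0))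
        + (∑ i, ∑ j, (if i ∈ D ∧ j ∈ Dminus x ∧ G.Adj i j then (1 : ℝ) else 0)) := by
    rw [← Finset.sum_add_distrib, ← Finset.sum_add_distrib]
    refine Finset.sum_congr rfl fun i _ => ?_
    rw [← Finset.sum_add_distrib, ← Finset.sum_add_distrib]
    exact Finset.sum_congr rfl fun j _ => hdec i j
  rw [hsum0, hSD, hSP, hSM] at htot
  linarith
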